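/- Let a > 0 be a real number and let P ∈ E_a(ℝ) be a point of infinite order. Then λ_∞(P) > (1/4)·log a − (1/12)·log|Δ(E_a)|. -/

import Mathlib

open Filter Real

/-- The translated elliptic curve `E'_a : y² = x³ − 3√a·x² + 4a·x − 2a^{3/2}` over `ℝ`,
obtained from `E_a : y² = x³ + a·x` via `x ↦ x + √a`. -/
noncomputable def E'curve (a : ℝ) : WeierstrassCurve.Affine ℝ :=
  { a₁ := 0, a₂ := -3 * Real.sqrt a, a₃ := 0, a₄ := 4 * a, a₆ := -2 * a ^ ((3 : ℝ) / 2) }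

/-- The x-coordinate of a point (with junk value `0` at the identity `O`). -/
def xc {F : Type*} [Field F] {W : WeierstrassCurve.Affine F} : W.Point → F
  | .zero => 0
  | @WeierstrassCurve.Affine.Point.some _ _ _ x _ _ => x

/-- For a finite point `Q` of `E'_a` with `x(Q) = x`, the quantity
`z(Q) = 1 − 8a·x⁻² + 16·a^{3/2}·x⁻³ − 8a²·x⁻⁴` from Tate's series. -/
noncomputable def zE' (a x : ℝ) : ℝ :=
  1 - 8 * a / x ^ 2 + 16 * a ^ ((3 : ℝ) / 2) / x ^ 3 - 8 * a ^ 2 / x ^ 4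

/-- The archimedean local height of a point `P ∈ E_a(ℝ)` of infinite order (`a > 0`),
computed on the translated curve `E'_a` at the corresponding point `P'`:
`λ_∞(P) = (1/8)·log(x(P')⁴·z(P')) + (1/8)·S − (1/12)·log|Δ(E_a)|`, where `S` is the
(hypothesized) value of the series `∑_{k≥1} 4^{−k}·log z(2^kP')` and `Δ(E_a) = −64a³`. -/
noncomputable def lamInf' (a : ℝ) {W : WeierstrassCurve.Affine ℝ} (P' : W.Point) (S : ℝ) : ℝ :=
  (1 / 8) * Real.log ((xc P') ^ 4 * zE' a (xc P')) + (1 / 8) * S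
    - (1 / 12) * Real.log |(-64) * a ^ 3|

private lemma a_pow32 (a : ℝ) (ha : 0 < a) : a ^ ((3 : ℝ) / 2) = Real.sqrt a ^ 3 := by
  rw [Real.sqrt_eq_rpow, ← Real.rpow_natCast (a ^ (1 / (2:ℝ))) 3, ← Real.rpow_mul ha.le]
  norm_num

private lemma key_ineq (s x x1 : ℝ) (hs : 0 < s) (hx : s < x) (hx1 : s ≤ x1)
    (hrel : x1 * (4 * ((x - s) * ((x - s) ^ 2 + s ^ 2)))
      = x ^ 4 - 8 * s ^ 2 * x ^ 2 + 16 * s ^ 3 * x - 8 * s ^ 4) :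
    s * (x1 - s) / x1 ^ 2 - 4 * s * (x - s) / x ^ 2
      ≤ Real.log ((x ^ 4 - 8 * s ^ 2 * x ^ 2 + 16 * s ^ 3 * x - 8 * s ^ 4) / x ^ 4) := by
  have hxs : 0 < x - s := sub_pos.2 hx
  have hxpos : 0 < x := hs.trans hx
  have hx1pos : 0 < x1 := lt_of_lt_of_le hs hx1
  have hUpos : 0 < 4 * ((x - s) * ((x - s) ^ 2 + s ^ 2)) := by positivity
  have hGpos : 0 < x ^ 4 - 8 * s ^ 2 * x ^ 2 + 16 * s ^ 3 * x - 8 * s ^ 4 := by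
    rw [← hrel]; exact mul_pos hx1pos hUpos
  have hx1e : x1 = (x ^ 4 - 8 * s ^ 2 * x ^ 2 + 16 * s ^ 3 * x - 8 * s ^ 4)
      / (4 * ((x - s) * ((x - s) ^ 2 + s ^ 2))) := (eq_div_iff hUpos.ne').mpr hrel
  have hq : (0:ℝ) ≤ x ^ 4 - 2 * s * x ^ 3 - 2 * s ^ 2 * x ^ 2 + 8 * s ^ 3 * x - 4 * s ^ 4 := by
    nlinarith [sq_nonneg (s ^ 2 - (x - s) ^ 2),
      mul_nonneg (mul_nonneg (mul_nonneg (by norm_num : (0:ℝ) ≤ 2) hs.le) hxs.le)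
        (by positivity : (0:ℝ) ≤ s ^ 2 + (x - s) ^ 2)]
  have e : 1 - x ^ 4 / (x ^ 4 - 8 * s ^ 2 * x ^ 2 + 16 * s ^ 3 * x - 8 * s ^ 4)
      - (s * (x1 - s) / x1 ^ 2 - 4 * s * (x - s) / x ^ 2)
      = 16 * s ^ 2 * (x - s) ^ 2 * (x - 2 * s) ^ 2
          * (x ^ 4 - 2 * s * x ^ 3 - 2 * s ^ 2 * x ^ 2 + 8 * s ^ 3 * x - 4 * s ^ 4)
        / ((x ^ 4 - 8 * s ^ 2 * x ^ 2 + 16 * s ^ 3 * x - 8 * s ^ 4) ^ 2 * x ^ 2) := by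
    rw [hx1e]
    have hG' := hGpos.ne'
    have hU' := hUpos.ne'
    have hx' := hxpos.ne'
    generalize hGd : x ^ 4 - 8 * s ^ 2 * x ^ 2 + 16 * s ^ 3 * x - 8 * s ^ 4 = G at hG' ⊢
    field_simp
    rw [← hGd]
    ring
  have hfracnn : (0:ℝ) ≤ 16 * s ^ 2 * (x - s) ^ 2 * (x - 2 * s) ^ 2
      * (x ^ 4 - 2 * s * x ^ 3 - 2 * s ^ 2 * x ^ 2 + 8 * s ^ 3 * x - 4 * s ^ 4)
      / ((x ^ 4 - 8 * s ^ 2 * x ^ 2 + 16 * s ^ 3 * x - 8 * s ^ 4) ^ 2 * x ^ 2) := by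
    apply div_nonneg _ (by positivity)
    have : (0:ℝ) ≤ 16 * s ^ 2 * (x - s) ^ 2 * (x - 2 * s) ^ 2 := by positivity
    exact mul_nonneg this hq
  have hlog : 1 - x ^ 4 / (x ^ 4 - 8 * s ^ 2 * x ^ 2 + 16 * s ^ 3 * x - 8 * s ^ 4)
      ≤ Real.log ((x ^ 4 - 8 * s ^ 2 * x ^ 2 + 16 * s ^ 3 * x - 8 * s ^ 4) / x ^ 4) := by
    have h1 := Real.log_le_sub_one_of_pos
      (show (0:ℝ) < x ^ 4 / (x ^ 4 - 8 * s ^ 2 * x ^ 2 + 16 * s ^ 3 * x - 8 * s ^ 4) by positivity)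
    have h2 : Real.log (x ^ 4 / (x ^ 4 - 8 * s ^ 2 * x ^ 2 + 16 * s ^ 3 * x - 8 * s ^ 4))
        = - Real.log ((x ^ 4 - 8 * s ^ 2 * x ^ 2 + 16 * s ^ 3 * x - 8 * s ^ 4) / x ^ 4) := by
      rw [← Real.log_inv]
      congr 1
      field_simp
    rw [h2] at h1
    linarith
  linarith

open WeierstrassCurve.Affine in
private lemma pt_step (a : ℝ) (ha : 0 < a) (Q : (E'curve a).Point) (h0 : Q ≠ 0)
    (h2 : 2 • Q ≠ 0) :
    Real.sqrt a < xc Q ∧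
    xc (2 • Q) * (4 * ((xc Q - Real.sqrt a) * ((xc Q - Real.sqrt a) ^ 2 + Real.sqrt a ^ 2)))
      = (xc Q) ^ 4 - 8 * Real.sqrt a ^ 2 * (xc Q) ^ 2
        + 16 * Real.sqrt a ^ 3 * (xc Q) - 8 * Real.sqrt a ^ 4 := by
  set s : ℝ := Real.sqrt a with hs_def
  have hs : 0 < s := Real.sqrt_pos.mpr ha
  have ha2 : s ^ 2 = a := Real.sq_sqrt ha.le
  have h32 : a ^ ((3 : ℝ) / 2) = s ^ 3 := by rw [hs_def]; exact a_pow32 a ha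
  clear_value s
  rcases Q with _ | @⟨x, y, h⟩
  · exact absurd rfl h0
  have heq := (equation_iff (W := E'curve a) x y).mp h.1
  have hE1 : (E'curve a).a₁ = 0 := rfl
  have hE2 : (E'curve a).a₂ = -3 * Real.sqrt a := rfl
  have hE3 : (E'curve a).a₃ = 0 := rfl
  have hE4 : (E'curve a).a₄ = 4 * a := rfl
  have hE6 : (E'curve a).a₆ = -2 * a ^ ((3 : ℝ) / 2) := rfl
  rw [hE1, hE2, hE3, hE4, hE6, h32, ← hs_def] at heq
  have hy2 : y ^ 2 = (x - s) * ((x - s) ^ 2 + s ^ 2) := by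
    linear_combination heq - 4 * x * ha2
  have hnegY : (E'curve a).negY x y = -y := by
    rw [WeierstrassCurve.Affine.negY, hE1, hE3]; ring
  have hy0 : y ≠ 0 := by
    intro hy
    exact h2 (by
      rw [two_nsmul]
      exact WeierstrassCurve.Affine.Point.add_self_of_Y_eq (by rw [hnegY, hy, neg_zero]))
  have hxgt : s < x := by
    have hxge : s ≤ x := by
      by_contra hlt
      push_neg at hlt
      nlinarith [sq_nonneg y, sq_nonneg (x - s), hy2]
    rcases lt_or_eq_of_le hxge with h' | h'
    · exact h'
    · exfalso
      apply hy0
      have hsq : y ^ 2 = 0 := by rw [hy2, ← h']; ring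
      exact (pow_eq_zero_iff (two_ne_zero)).mp hsq
  have hyne : y ≠ (E'curve a).negY x y := by
    rw [hnegY]
    intro hcon
    apply hy0
    linarith
  have h2Q : (2 • WeierstrassCurve.Affine.Point.some _ _ h : (E'curve a).Point)
      = WeierstrassCurve.Affine.Point.some _ _ (nonsingular_add h h fun hxy => hyne hxy.right) := by
    rw [two_nsmul]; exact WeierstrassCurve.Affine.Point.add_self_of_Y_ne hyne
  have hslope : (E'curve a).slope x x y y = (3 * x ^ 2 - 6 * s * x + 4 * s ^ 2) / (2 * y) := by
    rw [slope_of_Y_ne rfl hyne, hnegY, hE1, hE2, hE4, ← hs_def, ← ha2]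
    congr 1 <;> ring
  have hxc2 : xc (2 • (WeierstrassCurve.Affine.Point.some _ _ h : (E'curve a).Point))
      = ((3 * x ^ 2 - 6 * s * x + 4 * s ^ 2) / (2 * y)) ^ 2 + 3 * s - 2 * x := by
    rw [h2Q]
    show (E'curve a).addX x x ((E'curve a).slope x x y y) = _
    rw [WeierstrassCurve.Affine.addX, hslope, hE1, hE2, ← hs_def]
    ring
  refine ⟨hxgt, ?_⟩
  have hy2' : 4 * ((xc (WeierstrassCurve.Affine.Point.some _ _ h : (E'curve a).Point) - s)
      * ((xc (WeierstrassCurve.Affine.Point.some _ _ h : (E'curve a).Point) - s) ^ 2 + s ^ 2))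
      = 4 * y ^ 2 := by
    show 4 * ((x - s) * ((x - s) ^ 2 + s ^ 2)) = 4 * y ^ 2
    rw [hy2]
  rw [hy2', hxc2]
  show _ = x ^ 4 - 8 * s ^ 2 * x ^ 2 + 16 * s ^ 3 * x - 8 * s ^ 4
  have hsq : ((3 * x ^ 2 - 6 * s * x + 4 * s ^ 2) / (2 * y)) ^ 2 * (4 * y ^ 2)
      = (3 * x ^ 2 - 6 * s * x + 4 * s ^ 2) ^ 2 := by
    have h4y : (4 : ℝ) * y ^ 2 ≠ 0 := by positivity
    rw [div_pow, show ((2:ℝ) * y) ^ 2 = 4 * y ^ 2 by ring, div_mul_cancel₀ _ h4y]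
  calc (((3 * x ^ 2 - 6 * s * x + 4 * s ^ 2) / (2 * y)) ^ 2 + 3 * s - 2 * x) * (4 * y ^ 2)
      = ((3 * x ^ 2 - 6 * s * x + 4 * s ^ 2) / (2 * y)) ^ 2 * (4 * y ^ 2)
        + (3 * s - 2 * x) * (4 * y ^ 2) := by ring
    _ = (3 * x ^ 2 - 6 * s * x + 4 * s ^ 2) ^ 2
        + (3 * s - 2 * x) * (4 * ((x - s) * ((x - s) ^ 2 + s ^ 2))) := by rw [hsq, hy2]
    _ = x ^ 4 - 8 * s ^ 2 * x ^ 2 + 16 * s ^ 3 * x - 8 * s ^ 4 := by ring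

/-- Lemma 3.4(a): for `a > 0` and a point `P ∈ E_a(ℝ)` of infinite order (given by the
corresponding point `P'` of infinite order on the translated curve `E'_a`),
`λ_∞(P) > (1/4)·log a − (1/12)·log|Δ(E_a)|`. -/
theorem arch_a_pos_part_a (a : ℝ) (ha : 0 < a)
    (P' : (E'curve a).Point)
    (hP : ∀ n : ℕ, 0 < n → n • P' ≠ 0)
    (S : ℝ)
    (hS : HasSum
      (fun k : ℕ => (1 / 4 : ℝ) ^ (k + 1) * Real.log (zE' a (xc ((2 ^ (k + 1)) • P')))) S) :
    lamInf' a P' S > (1 / 4) * Real.log a - (1 / 12) * Real.log |(-64) * a ^ 3| := by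
  obtain ⟨s, hs, rfl⟩ : ∃ s : ℝ, 0 < s ∧ s ^ 2 = a :=
    ⟨Real.sqrt a, Real.sqrt_pos.mpr ha, Real.sq_sqrt ha.le⟩
  have hss : Real.sqrt (s ^ 2) = s := Real.sqrt_sq hs.le
  have h32 : (s ^ 2 : ℝ) ^ ((3 : ℝ) / 2) = s ^ 3 := by
    rw [a_pow32 _ (by positivity), hss]
  -- rewrite zE' as a single fraction
  have hz : ∀ x : ℝ, x ≠ 0 → zE' (s ^ 2) x
      = (x ^ 4 - 8 * s ^ 2 * x ^ 2 + 16 * s ^ 3 * x - 8 * s ^ 4) / x ^ 4 := by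
    intro x hx
    rw [zE', h32]
    field_simp
  -- step lemma specialized
  have step : ∀ Q : (E'curve (s ^ 2)).Point, Q ≠ 0 → 2 • Q ≠ 0 →
      s < xc Q ∧ xc (2 • Q) * (4 * ((xc Q - s) * ((xc Q - s) ^ 2 + s ^ 2)))
        = (xc Q) ^ 4 - 8 * s ^ 2 * (xc Q) ^ 2 + 16 * s ^ 3 * (xc Q) - 8 * s ^ 4 := by
    intro Q h0 h2
    have h := pt_step (s ^ 2) (by positivity) Q h0 h2
    rwa [hss] at h
  -- the orbit
  have hQ : ∀ k : ℕ, ((2 ^ k) • P' : (E'curve (s ^ 2)).Point) ≠ 0 :=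
    fun k => hP (2 ^ k) (pow_pos (by norm_num) k)
  have h2k : ∀ k : ℕ, ((2 ^ (k + 1)) • P' : (E'curve (s ^ 2)).Point)
      = 2 • ((2 ^ k) • P') := by
    intro k
    simp only [pow_succ]
    exact mul_nsmul P' (2 ^ k) 2
  have main : ∀ k : ℕ, s < xc ((2 ^ k) • P') ∧
      xc ((2 ^ (k + 1)) • P')
        * (4 * ((xc ((2 ^ k) • P') - s) * ((xc ((2 ^ k) • P') - s) ^ 2 + s ^ 2)))
      = (xc ((2 ^ k) • P')) ^ 4 - 8 * s ^ 2 * (xc ((2 ^ k) • P')) ^ 2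
        + 16 * s ^ 3 * (xc ((2 ^ k) • P')) - 8 * s ^ 4 := by
    intro k
    rw [h2k k]
    exact step ((2 ^ k) • P') (hQ k) (by rw [← h2k k]; exact hQ (k + 1))
  have hXgt : ∀ k : ℕ, s < xc ((2 ^ k) • P') := fun k => (main k).1
  have hXpos : ∀ k : ℕ, (0:ℝ) < xc ((2 ^ k) • P') := fun k => hs.trans (hXgt k)
  -- the comparison sequence
  set B : ℕ → ℝ := fun k => (1 / 4 : ℝ) ^ (k + 1)
    * (4 * s * (xc ((2 ^ (k + 1)) • P') - s) / (xc ((2 ^ (k + 1)) • P')) ^ 2) with hB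
  have hBnn : ∀ k : ℕ, 0 ≤ B k := by
    intro k
    apply mul_nonneg (by positivity)
    apply div_nonneg _ (sq_nonneg _)
    have := (hXgt (k + 1)).le
    have h4s : (0:ℝ) ≤ 4 * s := by positivity
    nlinarith
  have hterm : ∀ k : ℕ, B (k + 1) - B k
      ≤ (1 / 4 : ℝ) ^ (k + 1) * Real.log (zE' (s ^ 2) (xc ((2 ^ (k + 1)) • P'))) := by
    intro k
    have hk := key_ineq s (xc ((2 ^ (k + 1)) • P')) (xc ((2 ^ (k + 1 + 1)) • P'))
      hs (hXgt (k + 1)) (hXgt (k + 1 + 1)).le (main (k + 1)).2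
    rw [hz (xc ((2 ^ (k + 1)) • P')) (hXpos (k + 1)).ne']
    calc B (k + 1) - B k
        = (1 / 4 : ℝ) ^ (k + 1)
          * (s * (xc ((2 ^ (k + 1 + 1)) • P') - s) / (xc ((2 ^ (k + 1 + 1)) • P')) ^ 2
             - 4 * s * (xc ((2 ^ (k + 1)) • P') - s) / (xc ((2 ^ (k + 1)) • P')) ^ 2) := by
          simp only [hB]
          ring
      _ ≤ _ := mul_le_mul_of_nonneg_left hk (by positivity)
  -- lower bound on S
  have hpart : ∀ n : ℕ, -B 0 ≤ ∑ k ∈ Finset.range n,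
      (1 / 4 : ℝ) ^ (k + 1) * Real.log (zE' (s ^ 2) (xc ((2 ^ (k + 1)) • P'))) := by
    intro n
    have h1 : ∑ k ∈ Finset.range n, (B (k + 1) - B k)
        ≤ ∑ k ∈ Finset.range n,
          (1 / 4 : ℝ) ^ (k + 1) * Real.log (zE' (s ^ 2) (xc ((2 ^ (k + 1)) • P'))) :=
      Finset.sum_le_sum fun i _ => hterm i
    rw [Finset.sum_range_sub B n] at h1
    linarith [hBnn n]
  have hSlb : -B 0 ≤ S := ge_of_tendsto' hS.tendsto_sum_nat hpart
  -- level-0 facts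
  have hP0 : ((2 ^ 0) • P' : (E'curve (s ^ 2)).Point) = P' := by
    rw [pow_zero, one_smul]
  have hx0gt : s < xc P' := by rw [← hP0]; exact hXgt 0
  have hx0pos : 0 < xc P' := hs.trans hx0gt
  have hk0 := key_ineq s (xc ((2 ^ 0) • P')) (xc ((2 ^ (0 + 1)) • P'))
    hs (hXgt 0) (hXgt (0 + 1)).le (main 0).2
  rw [hP0] at hk0
  have hB0 : B 0 = s * (xc ((2 ^ (0 + 1)) • P') - s) / (xc ((2 ^ (0 + 1)) • P')) ^ 2 := by
    simp only [hB]
    ring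
  -- positivity of G at level 0
  have hG0 : 0 < (xc P') ^ 4 - 8 * s ^ 2 * (xc P') ^ 2 + 16 * s ^ 3 * (xc P') - 8 * s ^ 4 := by
    have h := (main 0).2
    rw [hP0] at h
    rw [← h]
    have h1 : (0:ℝ) < xc ((2 ^ (0 + 1)) • P') := hXpos (0 + 1)
    have h2 : 0 < xc P' - s := sub_pos.2 hx0gt
    positivity
  -- log identities
  have hzx0 : zE' (s ^ 2) (xc P')
      = ((xc P') ^ 4 - 8 * s ^ 2 * (xc P') ^ 2 + 16 * s ^ 3 * (xc P') - 8 * s ^ 4)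
        / (xc P') ^ 4 := hz _ hx0pos.ne'
  have hlogeq : Real.log ((xc P') ^ 4 * zE' (s ^ 2) (xc P'))
      = 4 * Real.log (xc P')
        + Real.log (((xc P') ^ 4 - 8 * s ^ 2 * (xc P') ^ 2 + 16 * s ^ 3 * (xc P') - 8 * s ^ 4)
            / (xc P') ^ 4) := by
    rw [hzx0, Real.log_mul (by positivity) (by positivity), Real.log_pow]
    norm_num
  -- strict inequality 4 log x0 - beta0 > 2 log s
  have hlogx0 : Real.log s - Real.log (xc P') ≤ s / (xc P') - 1 := by
    have h1 := Real.log_le_sub_one_of_pos (show 0 < s / xc P' by positivity)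
    rwa [Real.log_div hs.ne' hx0pos.ne'] at h1
  have hgap : 4 * (1 - s / xc P') - 4 * s * (xc P' - s) / (xc P') ^ 2
      = 4 * (xc P' - s) ^ 2 / (xc P') ^ 2 := by
    field_simp
  have hgappos : 0 < 4 * (xc P' - s) ^ 2 / (xc P') ^ 2 := by
    have h2 : 0 < xc P' - s := sub_pos.2 hx0gt
    positivity
  have hlogs : Real.log (s ^ 2) = 2 * Real.log s := by
    rw [Real.log_pow]
    norm_num
  -- combine
  have hkey : (1 / 4 : ℝ) * Real.log (s ^ 2)
      < (1 / 8 : ℝ) * Real.log ((xc P') ^ 4 * zE' (s ^ 2) (xc P')) + (1 / 8 : ℝ) * S := by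
    rw [hlogeq, hlogs]
    have hb0 : -(s * (xc ((2 ^ (0 + 1)) • P') - s) / (xc ((2 ^ (0 + 1)) • P')) ^ 2) ≤ S := by
      rw [← hB0]; exact hSlb
    linarith [hk0, hb0, hlogx0, hgap ▸ hgappos]
  unfold lamInf'
  linarith [hkey]
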